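/- Let X be a topological space, n a positive natural number, and σ : Δⁿ → X a singular simplex with ∂ₙσ = 0 in C_*(X; ℤ). Then there exists a bijection π : {0,2,...,n-1} → {1,3,...,n} such that σ ∘ i_j = σ ∘ i_{π(j)} for all j ∈ {0,2,...,n-1}. -/

import Mathlib

open Finsupp

noncomputable section

namespace SimplexCategory

/-- The old Mathlib `SimplexCategory.toTopObj` (removed upstream), restored verbatim in meaning. -/
def toTopObj (x : SimplexCategory) := { f : Fin (x.len + 1) → NNReal | ∑ i, f i = 1 }

instance (x : SimplexCategory) : CoeFun x.toTopObj fun _ => Fin (x.len + 1) → NNReal :=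
  ⟨fun f => (f : Fin (x.len + 1) → NNReal)⟩

instance (x : SimplexCategory) : TopologicalSpace x.toTopObj :=
  inferInstanceAs (TopologicalSpace { f : Fin (x.len + 1) → NNReal | ∑ i, f i = 1 })

/-- The old Mathlib `SimplexCategory.toTopMap`. -/
def toTopMap {x y : SimplexCategory} (f : x ⟶ y) (g : x.toTopObj) : y.toTopObj :=
  ⟨fun i => ∑ j ∈ Finset.univ.filter (f.toOrderHom · = i), g j, by
    simp only [toTopObj, Set.mem_setOf]
    rw [← Finset.sum_biUnion]
    · have hg : ∑ i : Fin (x.len + 1), g i = 1 := g.2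
      convert hg
      simp [Finset.eq_univ_iff_forall]
    · apply Set.pairwiseDisjoint_filter⟩

theorem continuous_toTopMap {x y : SimplexCategory} (f : x ⟶ y) : Continuous (toTopMap f) := by
  refine Continuous.subtype_mk (continuous_pi fun i => ?_) _
  exact continuous_finset_sum _ (fun j _ => (continuous_apply _).comp continuous_subtype_val)

end SimplexCategory

/-- The topological standard `n`-simplex. -/
abbrev TopSimplex (n : ℕ) : Type :=
  (SimplexCategory.mk n).toTopObj

/-- Singular `n`-simplices on `X`. -/
abbrev SingularSimplex (n : ℕ) (X : Type*) [TopologicalSpace X] : Type _ :=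
  C(TopSimplex n, X)

/-- Singular `n`-chains on `X` with coefficients in `R`. -/
abbrev SC (R : Type*) [Ring R] (n : ℕ) (X : Type*) [TopologicalSpace X] : Type _ :=
  SingularSimplex n X →₀ R

/-- The inclusion of the `j`-th face of the standard `(n+1)`-simplex. -/
def faceIncl (n : ℕ) (j : Fin (n + 2)) : C(TopSimplex n, TopSimplex (n + 1)) :=
  ⟨SimplexCategory.toTopMap (SimplexCategory.δ j), SimplexCategory.continuous_toTopMap _⟩

/-- The `j`-th face of a singular `(n+1)`-simplex. -/
def sface {n : ℕ} {X : Type*} [TopologicalSpace X] (j : Fin (n + 2))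
    (σ : SingularSimplex (n + 1) X) : SingularSimplex n X :=
  σ.comp (faceIncl n j)

/-- The singular boundary operator. -/
def bdry (R : Type*) [Ring R] {n : ℕ} (X : Type*) [TopologicalSpace X] :
    SC R (n + 1) X →+ SC R n X :=
  Finsupp.liftAddHom fun σ =>
    ∑ j : Fin (n + 2), (Finsupp.singleAddHom (sface j σ)).comp
      (AddMonoidHom.mulLeft ((-1 : R) ^ (j : ℕ)))

/-- The subgroup of singular cycles. -/
def cycles (R : Type*) [Ring R] : (n : ℕ) → (X : Type*) → [TopologicalSpace X] →
    AddSubgroup (SC R n X)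
  | 0, _, _ => ⊤
  | (_ + 1), X, _ => (bdry R X).ker

/-- The subgroup of singular boundaries. -/
def bdries (R : Type*) [Ring R] (n : ℕ) (X : Type*) [TopologicalSpace X] :
    AddSubgroup (SC R n X) :=
  (bdry R (n := n) X).range

/-- Singular homology of `X` in degree `n` with coefficients in `R`. -/
abbrev SH (R : Type*) [Ring R] (n : ℕ) (X : Type*) [TopologicalSpace X] : Type _ :=
  cycles R n X ⧸ ((bdries R n X).addSubgroupOf (cycles R n X))

/-- The homology class of a cycle. -/
def hcls {R : Type*} [Ring R] {n : ℕ} {X : Type*} [TopologicalSpace X]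
    (c : SC R n X) (hc : c ∈ cycles R n X) : SH R n X :=
  QuotientAddGroup.mk ⟨c, hc⟩

lemma mem_cycles_of {R : Type*} [Ring R] {n : ℕ} {X : Type*} [TopologicalSpace X]
    {c : SC R (n + 1) X} (hc : bdry R X c = 0) : c ∈ cycles R (n + 1) X :=
  hc

/-- The chain map induced by a continuous map. -/
def cmap (R : Type*) [Ring R] {n : ℕ} {X Y : Type*} [TopologicalSpace X] [TopologicalSpace Y]
    (f : C(X, Y)) : SC R n X →+ SC R n Y :=
  Finsupp.liftAddHom fun σ => Finsupp.singleAddHom (f.comp σ)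

lemma sface_comp {n : ℕ} {X Y : Type*} [TopologicalSpace X] [TopologicalSpace Y]
    (f : C(X, Y)) (j : Fin (n + 2)) (σ : SingularSimplex (n + 1) X) :
    sface j (f.comp σ) = f.comp (sface j σ) := rfl

lemma cmap_bdry (R : Type*) [Ring R] {n : ℕ} {X Y : Type*} [TopologicalSpace X]
    [TopologicalSpace Y] (f : C(X, Y)) (c : SC R (n + 1) X) :
    bdry R Y (cmap R f c) = cmap R f (bdry R X c) := by
  have : (bdry R Y).comp (cmap R (n := n + 1) f) = (cmap R f).comp (bdry R X) := by
    refine Finsupp.addHom_ext fun σ a => ?_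
    simp only [AddMonoidHom.comp_apply, bdry, cmap, Finsupp.liftAddHom_apply_single,
      AddMonoidHom.finset_sum_apply, AddMonoidHom.coe_comp, Function.comp_apply,
      AddMonoidHom.coe_mulLeft, Finsupp.singleAddHom_apply, map_sum, sface_comp]
  exact DFunLike.congr_fun this c

lemma cmap_mem_cycles {R : Type*} [Ring R] {n : ℕ} {X Y : Type*} [TopologicalSpace X]
    [TopologicalSpace Y] (f : C(X, Y)) {c : SC R n X} (hc : c ∈ cycles R n X) :
    cmap R f c ∈ cycles R n Y := by
  cases n with
  | zero => trivial
  | succ n =>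
      have hc' : bdry R X c = 0 := hc
      show bdry R Y (cmap R f c) = 0
      rw [cmap_bdry, hc', map_zero]

/-- The map induced on homology by a continuous map. -/
def hmap (R : Type*) [Ring R] {n : ℕ} {X Y : Type*} [TopologicalSpace X] [TopologicalSpace Y]
    (f : C(X, Y)) : SH R n X →+ SH R n Y :=
  QuotientAddGroup.map _ _
    (AddMonoidHom.codRestrict ((cmap R f).comp (cycles R n X).subtype) (cycles R n Y)
      fun c => cmap_mem_cycles f c.2)
    (by
      rintro ⟨c, hc⟩ hmem
      have hb : c ∈ bdries R n X := hmem
      obtain ⟨b, hb⟩ := hb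
      show _ ∈ (bdries R n Y).addSubgroupOf _
      refine ⟨cmap R f b, ?_⟩
      simp only [AddMonoidHom.codRestrict_apply, AddMonoidHom.comp_apply,
        AddSubgroup.coe_subtype]
      rw [cmap_bdry, hb])

/-- The `ℓ¹`-norm of an integral chain. -/
def norm1 {n : ℕ} {X : Type*} [TopologicalSpace X] (c : SC ℤ n X) : ℕ :=
  c.sum fun _ a => a.natAbs

/-- The integral `ℓ¹`-seminorm of an integral homology class. -/
def clnorm {n : ℕ} {X : Type*} [TopologicalSpace X] (α : SH ℤ n X) : ℕ :=
  sInf { m | ∃ c : cycles ℤ n X, (QuotientAddGroup.mk c : SH ℤ n X) = α ∧ norm1 c.1 = m }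

/-- A fundamental class: a generator of the infinite cyclic top homology of an oriented
closed connected manifold. -/
structure FundClass (n : ℕ) (M : Type*) [TopologicalSpace M] where
  cls : SH ℤ n M
  spans : ∀ x : SH ℤ n M, ∃ k : ℤ, x = k • cls
  torsionfree : ∀ k : ℤ, k • cls = 0 → k = 0

/-- The integral simplicial volume. -/
def isv (n : ℕ) (M : Type*) [TopologicalSpace M] (φ : FundClass n M) : ℕ :=
  clnorm φ.cls

/-- A matching on the faces of the standard `(n+1)`-simplex: a bijection from the
even-indexed faces onto the odd-indexed faces. -/
def IsMatching (n : ℕ) (π : Fin (n + 2) → Fin (n + 2)) : Prop :=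
  Set.BijOn π { j | Even (j : ℕ) } { j | Odd (j : ℕ) }

/-- The gluing relation of the model space of a matching. -/
def matchRel (n : ℕ) (π : Fin (n + 2) → Fin (n + 2)) (x y : TopSimplex (n + 1)) : Prop :=
  ∃ j : Fin (n + 2), Even (j : ℕ) ∧ ∃ t : TopSimplex n,
    x = faceIncl n j t ∧ y = faceIncl n (π j) t

/-- The model space `M_π` of a matching `π`. -/
abbrev ModelSpace (n : ℕ) (π : Fin (n + 2) → Fin (n + 2)) : Type :=
  Quot (matchRel n π)

/-- The canonical projection `σ_π : Δ^{n+1} → M_π`, a singular simplex on `M_π`. -/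
def modelProj (n : ℕ) (π : Fin (n + 2) → Fin (n + 2)) :
    SingularSimplex (n + 1) (ModelSpace n π) :=
  ⟨Quot.mk _, continuous_quot_mk⟩

/-- The unreduced suspension of a space. -/
abbrev Susp (Y : Type*) [TopologicalSpace Y] : Type _ :=
  Quot (fun a b : Y × (Set.Icc (-1 : ℝ) 1) =>
    ((a.2 : ℝ) = 1 ∧ (b.2 : ℝ) = 1) ∨ ((a.2 : ℝ) = -1 ∧ (b.2 : ℝ) = -1))

end

theorem stmt1 (X : Type*) [TopologicalSpace X] (n : ℕ) (σ : SingularSimplex (n + 1) X)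
    (h : bdry ℤ X (Finsupp.single σ 1) = 0) :
    ∃ π : Fin (n + 2) → Fin (n + 2), IsMatching n π ∧
      ∀ j : Fin (n + 2), Even (j : ℕ) → sface j σ = sface (π j) σ := by
  classical
  set s : Fin (n + 2) → SingularSimplex n X := fun j => sface j σ with hs
  have h0 : ∀ τ, ∑ j : Fin (n + 2), (if s j = τ then ((-1 : ℤ) ^ (j : ℕ)) else 0) = 0 := by
    intro τ
    have := congrArg (fun c => c τ) h
    simpa [bdry, Finsupp.liftAddHom_apply_single, AddMonoidHom.finset_sum_apply,
      Finsupp.finset_sum_apply, Finsupp.single_apply, hs] using this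
  have hcard : ∀ τ, Fintype.card {j : Fin (n + 2) // Even (j : ℕ) ∧ s j = τ}
      = Fintype.card {j : Fin (n + 2) // ¬ Even (j : ℕ) ∧ s j = τ} := by
    intro τ
    have hsum : ∑ j : Fin (n + 2), ((if Even (j : ℕ) ∧ s j = τ then (1 : ℤ) else 0)
        - (if ¬ Even (j : ℕ) ∧ s j = τ then (1 : ℤ) else 0)) = 0 := by
      calc ∑ j : Fin (n + 2), ((if Even (j : ℕ) ∧ s j = τ then (1 : ℤ) else 0)
            - (if ¬ Even (j : ℕ) ∧ s j = τ then (1 : ℤ) else 0))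
          = ∑ j : Fin (n + 2), (if s j = τ then ((-1 : ℤ) ^ (j : ℕ)) else 0) := by
            refine Finset.sum_congr rfl fun j _ => ?_
            rcases Nat.even_or_odd (j : ℕ) with hj | hj
            · simp [hj, Even.neg_one_pow hj]
            · have hj' := Nat.not_even_iff_odd.mpr hj
              by_cases hτ : s j = τ <;> simp [hj', hτ, Odd.neg_one_pow hj]
        _ = 0 := h0 τ
    rw [Finset.sum_sub_distrib, sub_eq_zero, Finset.sum_boole, Finset.sum_boole] at hsum
    have hnat : (Finset.univ.filter fun j : Fin (n + 2) => Even (j : ℕ) ∧ s j = τ).card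
        = (Finset.univ.filter fun j : Fin (n + 2) => ¬ Even (j : ℕ) ∧ s j = τ).card := by
      exact_mod_cast hsum
    simpa [Fintype.card_subtype] using hnat
  have hfib : ∀ τ, Nonempty ({a : {j : Fin (n + 2) // Even (j : ℕ)} // s a.1 = τ}
      ≃ {b : {j : Fin (n + 2) // ¬ Even (j : ℕ)} // s b.1 = τ}) := by
    intro τ
    refine ⟨Fintype.equivOfCardEq ?_⟩
    calc Fintype.card {a : {j : Fin (n + 2) // Even (j : ℕ)} // s a.1 = τ}
        = Fintype.card {j : Fin (n + 2) // Even (j : ℕ) ∧ s j = τ} :=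
          Fintype.card_congr (Equiv.subtypeSubtypeEquivSubtypeInter (fun j : Fin (n + 2) => Even (j : ℕ)) (fun j => s j = τ))
      _ = Fintype.card {j : Fin (n + 2) // ¬ Even (j : ℕ) ∧ s j = τ} := hcard τ
      _ = Fintype.card {b : {j : Fin (n + 2) // ¬ Even (j : ℕ)} // s b.1 = τ} :=
          (Fintype.card_congr (Equiv.subtypeSubtypeEquivSubtypeInter (fun j : Fin (n + 2) => ¬ Even (j : ℕ)) (fun j => s j = τ))).symm
  let e1 := (Equiv.sigmaFiberEquiv fun a : {j : Fin (n + 2) // Even (j : ℕ)} => s a.1).symm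
  let e2 := Equiv.sigmaCongrRight fun τ => (hfib τ).some
  let e3 := Equiv.sigmaFiberEquiv fun b : {j : Fin (n + 2) // ¬ Even (j : ℕ)} => s b.1
  let e := (e1.trans e2).trans e3
  have he : ∀ a : {j : Fin (n + 2) // Even (j : ℕ)}, s (e a).1 = s a.1 := by
    intro a
    exact ((e2 (e1 a)).2).2
  refine ⟨fun j => if hj : Even (j : ℕ) then (e ⟨j, hj⟩).1 else j, ?_, ?_⟩
  · refine ⟨fun j hj => ?_, fun j1 hj1 j2 hj2 hpi => ?_, fun k hk => ?_⟩
    · simp only [Set.mem_setOf_eq] at hj ⊢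
      rw [dif_pos hj]
      exact Nat.not_even_iff_odd.mp (e ⟨j, hj⟩).2
    · simp only [Set.mem_setOf_eq] at hj1 hj2
      dsimp only at hpi
      rw [dif_pos hj1, dif_pos hj2] at hpi
      have := e.injective (Subtype.ext hpi)
      exact congrArg Subtype.val this
    · simp only [Set.mem_setOf_eq] at hk
      have hk' : ¬ Even (k : ℕ) := Nat.not_even_iff_odd.mpr hk
      refine ⟨(e.symm ⟨k, hk'⟩).1, (e.symm ⟨k, hk'⟩).2, ?_⟩
      dsimp only
      rw [dif_pos (e.symm ⟨k, hk'⟩).2]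
      simp
  · intro j hj
    dsimp only
    rw [dif_pos hj]
    exact (he ⟨j, hj⟩).symm
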